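/- Let G be the group ⟨a, b | a^k = b^{ql} = 1, b a b^{-1} = a^n⟩ with q prime, n^q ≡ 1 (mod k), n ≢ 1 (mod k), and c = gcd(n-1, k). If q divides j and a^i is not central in G, then the conjugacy class of a^i b^j is {a^{i n^u} b^j : u = 0, 1, ..., q-1} and has exactly q elements. -/

import Mathlib

theorem stmt_9 {G : Type*} [Group G] [Fintype G] (k q l : ℕ) (n : ℤ) (a b : G)
    (hk : 0 < k) (hl : 0 < l) (hq : q.Prime)
    (hnq : n ^ q ≡ 1 [ZMOD (k : ℤ)]) (hn1 : ¬ n ≡ 1 [ZMOD (k : ℤ)])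
    (hoa : orderOf a = k) (hob : orderOf b = q * l)
    (hrel : b * a * b⁻¹ = a ^ n)
    (hgen : Subgroup.closure ({a, b} : Set G) = ⊤)
    (hcard : Fintype.card G = k * q * l)
    (i : ℤ) (j : ℕ) (hj : q ∣ j) (hcentral : a ^ i ∉ Subgroup.center G) :
    {g : G | IsConj (a ^ i * b ^ j) g}
        = {g : G | ∃ u : ℕ, u < q ∧ g = a ^ (i * n ^ u) * b ^ j} ∧
    {g : G | IsConj (a ^ i * b ^ j) g}.ncard = q := by
  classical
  -- conjugation of zpowers of a by b
  have hbz : ∀ z : ℤ, b * a ^ z * b⁻¹ = a ^ (z * n) := by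
    intro z
    rw [← conj_zpow, hrel, ← zpow_mul, mul_comm]
  -- key conjugation formula
  have key : ∀ (s : ℕ) (m : ℤ), b ^ s * a ^ m * (b ^ s)⁻¹ = a ^ (m * n ^ s) := by
    intro s
    induction s with
    | zero => intro m; simp
    | succ s ih =>
      intro m
      have hb : b ^ (s + 1) = b * b ^ s := by rw [pow_succ']
      rw [hb, mul_inv_rev, show b * b ^ s * a ^ m * ((b ^ s)⁻¹ * b⁻¹)
            = b * (b ^ s * a ^ m * (b ^ s)⁻¹) * b⁻¹ by group,
        ih, hbz, pow_succ, mul_assoc]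
  -- congruence translation
  have hmod : ∀ z w : ℤ, a ^ z = a ^ w ↔ ((z : ZMod k) = (w : ZMod k)) := by
    intro z w
    rw [zpow_eq_zpow_iff_modEq, hoa, ZMod.intCast_eq_intCast_iff]
  have hNq : ((n : ZMod k)) ^ q = 1 := by
    have := (ZMod.intCast_eq_intCast_iff _ _ _).mpr hnq
    push_cast at this
    exact this
  obtain ⟨jm, rfl⟩ := hj
  set j := q * jm with hjdef
  have hNj : ((n : ZMod k)) ^ j = 1 := by rw [hjdef, pow_mul, hNq, one_pow]
  -- powers of b by j commute with powers of a
  have hbja : ∀ m : ℤ, b ^ j * a ^ m * (b ^ j)⁻¹ = a ^ m := by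
    intro m
    rw [key j m, hmod]
    push_cast
    rw [hNj, mul_one]
  -- every element has the form a^m * b^s
  have hb1 : b ^ (q * l - 1) = b⁻¹ := by
    have h1 : 1 ≤ q * l := Nat.mul_pos hq.pos hl
    have h2 : b ^ (q * l - 1) * b = 1 := by
      rw [← pow_succ, Nat.sub_add_cancel h1, ← hob, pow_orderOf_eq_one]
    exact eq_inv_of_mul_eq_one_left h2
  have hform : ∀ g : G, ∃ (m : ℤ) (s : ℕ), g = a ^ m * b ^ s := by
    intro g
    let S : Subgroup G :=
      { carrier := {g : G | ∃ (m : ℤ) (s : ℕ), g = a ^ m * b ^ s}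
        one_mem' := ⟨0, 0, by simp⟩
        mul_mem' := by
          rintro x y ⟨m, s, rfl⟩ ⟨m', s', rfl⟩
          refine ⟨m + m' * n ^ s, s + s', ?_⟩
          rw [zpow_add, pow_add, ← key s m']
          group
        inv_mem' := by
          rintro x ⟨m, s, rfl⟩
          refine ⟨-m * n ^ ((q * l - 1) * s), (q * l - 1) * s, ?_⟩
          rw [← key ((q * l - 1) * s) (-m)]
          have hbb : b ^ ((q * l - 1) * s) = (b ^ s)⁻¹ := by
            rw [pow_mul, hb1, inv_pow]
          rw [hbb]
          group }
    have hle : Subgroup.closure ({a, b} : Set G) ≤ S := by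
      rw [Subgroup.closure_le]
      rintro x (rfl | rfl)
      · exact ⟨1, 0, by simp⟩
      · exact ⟨0, 1, by simp⟩
    exact hle (hgen ▸ Subgroup.mem_top g)
  -- conjugation formula for the element a^i * b^j
  have conjf : ∀ (m : ℤ) (s : ℕ),
      (a ^ m * b ^ s) * (a ^ i * b ^ j) * (a ^ m * b ^ s)⁻¹ = a ^ (i * n ^ s) * b ^ j := by
    intro m s
    have e1 : (a ^ m * b ^ s) * (a ^ i * b ^ j) * (a ^ m * b ^ s)⁻¹
        = a ^ m * (b ^ s * a ^ i * (b ^ s)⁻¹) * (b ^ j * a ^ (-m) * (b ^ j)⁻¹) * b ^ j := by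
      group
    rw [e1, key s i, hbja (-m)]
    group
  -- reduction of exponents mod q
  have hNs : ∀ s : ℕ, ((n : ZMod k)) ^ s = ((n : ZMod k)) ^ (s % q) := by
    intro s
    conv_lhs => rw [← Nat.mod_add_div s q]
    rw [pow_add, pow_mul, hNq, one_pow, mul_one]
  -- set equality
  have hset : {g : G | IsConj (a ^ i * b ^ j) g}
      = {g : G | ∃ u : ℕ, u < q ∧ g = a ^ (i * n ^ u) * b ^ j} := by
    ext g
    simp only [Set.mem_setOf_eq]
    constructor
    · intro hg
      rw [isConj_iff] at hg
      obtain ⟨c, hc⟩ := hg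
      obtain ⟨m, s, rfl⟩ := hform c
      rw [conjf m s] at hc
      refine ⟨s % q, Nat.mod_lt s hq.pos, ?_⟩
      rw [← hc]
      have : a ^ (i * n ^ s) = a ^ (i * n ^ (s % q)) := by
        rw [hmod]; push_cast; rw [hNs s]
      rw [this]
    · rintro ⟨u, hu, rfl⟩
      rw [isConj_iff]
      exact ⟨a ^ (0 : ℤ) * b ^ u, conjf 0 u⟩
  -- distinctness of the q elements
  have hinj : ∀ u < q, ∀ v < q, a ^ (i * n ^ u) * b ^ j = a ^ (i * n ^ v) * b ^ j → u = v := by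
    have main : ∀ u v : ℕ, u ≤ v → v < q →
        (i : ZMod k) * (n : ZMod k) ^ u = (i : ZMod k) * (n : ZMod k) ^ v → u = v := by
      intro u v huv hv he
      by_contra hne
      set d := v - u with hd
      have hd0 : 0 < d := Nat.sub_pos_of_lt (lt_of_le_of_ne huv hne)
      have hdq : d < q := lt_of_le_of_lt (Nat.sub_le v u) hv
      have huq : u ≤ q := le_of_lt (lt_of_le_of_lt huv hv)
      have hI : (i : ZMod k) * (n : ZMod k) ^ d = i := by
        have l1 : (i : ZMod k) * (n : ZMod k) ^ u * (n : ZMod k) ^ (q - u) = i := by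
          rw [mul_assoc, ← pow_add, Nat.add_sub_cancel' huq, hNq, mul_one]
        have hvq : v + (q - u) = q + d := by omega
        have l2 : (i : ZMod k) * (n : ZMod k) ^ v * (n : ZMod k) ^ (q - u)
            = i * (n : ZMod k) ^ d := by
          rw [mul_assoc, ← pow_add, hvq, pow_add, hNq, one_mul]
        rw [← l2, ← he, l1]
      -- Bezout
      have hcop : Nat.Coprime d q :=
        Nat.coprime_comm.mp (hq.coprime_iff_not_dvd.mpr
          (fun hdvd => absurd (Nat.le_of_dvd hd0 hdvd) (not_le.mpr hdq)))
      obtain ⟨x, -, hx⟩ := Nat.exists_mul_mod_eq_one_of_coprime hcop hq.one_lt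
      have hdx : d * x = q * (d * x / q) + 1 := by
        conv_lhs => rw [← Nat.div_add_mod (d * x) q]
        rw [hx, mul_comm]
      have hIm : ∀ m : ℕ, (i : ZMod k) * (n : ZMod k) ^ (d * m) = i := by
        intro m
        induction m with
        | zero => simp
        | succ m ih => rw [Nat.mul_succ, pow_add, ← mul_assoc, ih, hI]
      have hIn : (i : ZMod k) * (n : ZMod k) = i := by
        have h3 := hIm x
        rw [hdx, pow_add, pow_mul, hNq, one_pow, one_mul, pow_one] at h3
        exact h3
      -- a^i is central: contradiction
      apply hcentral
      have hcomm_b : b * a ^ i = a ^ i * b := by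
        have h4 := key 1 i
        simp only [pow_one] at h4
        have h5 : a ^ (i * n) = a ^ i := by rw [hmod]; push_cast; exact hIn
        rw [h5, mul_inv_eq_iff_eq_mul] at h4
        exact h4
      have hsub : Subgroup.closure ({a, b} : Set G) ≤ Subgroup.centralizer {a ^ i} := by
        rw [Subgroup.closure_le]
        have ha : a ∈ Subgroup.centralizer {a ^ i} := by
          rw [Subgroup.mem_centralizer_iff]
          rintro h rfl
          exact ((Commute.refl a).zpow_left i).eq
        have hbm : b ∈ Subgroup.centralizer {a ^ i} := by
          rw [Subgroup.mem_centralizer_iff]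
          rintro h rfl
          exact hcomm_b.symm
        exact Set.insert_subset_iff.mpr ⟨ha, Set.singleton_subset_iff.mpr hbm⟩
      rw [Subgroup.mem_center_iff]
      intro g
      have hg : g ∈ Subgroup.centralizer {a ^ i} := hsub (hgen ▸ Subgroup.mem_top g)
      exact ((Subgroup.mem_centralizer_iff.mp hg) (a ^ i) rfl).symm
    intro u hu v hv he
    have he' : (i : ZMod k) * (n : ZMod k) ^ u = (i : ZMod k) * (n : ZMod k) ^ v := by
      have h6 := mul_right_cancel he
      rw [hmod] at h6
      push_cast at h6
      exact h6
    rcases le_total u v with h' | h'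
    · exact main u v h' hv he'
    · exact (main v u h' hu he'.symm).symm
  refine ⟨hset, ?_⟩
  rw [hset]
  have himg : {g : G | ∃ u : ℕ, u < q ∧ g = a ^ (i * n ^ u) * b ^ j}
      = ↑((Finset.range q).image (fun u => a ^ (i * n ^ u) * b ^ j)) := by
    ext g
    simp only [Set.mem_setOf_eq, Finset.coe_image, Set.mem_image, Finset.mem_coe,
      Finset.mem_range]
    constructor
    · rintro ⟨u, hu, rfl⟩; exact ⟨u, hu, rfl⟩
    · rintro ⟨u, hu, rfl⟩; exact ⟨u, hu, rfl⟩
  rw [himg, Set.ncard_coe_finset, Finset.card_image_of_injOn, Finset.card_range]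
  intro u hu v hv he
  exact hinj u (Finset.mem_range.mp hu) v (Finset.mem_range.mp hv) he
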